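/- For every n ≥ 0 there exists an indecomposable representation M of Q with dimension vector (n, n+1, n, n+1) together with a short exact sequence of representations 0 → P₄ⁿ → P₂ ⊕ P₁ⁿ → M → 0. -/

import Mathlib

variable (k : Type) [Field k]

/-- A finite-dimensional representation of the quiver `Q` with vertices `1,2,3,4`
and arrows `a : 1 → 2`, `b : 1 → 3`, `c : 2 → 4`, `d : 3 → 4`. -/
structure QRep where
  V1 : Type
  V2 : Type
  V3 : Type
  V4 : Type
  [acg1 : AddCommGroup V1]
  [acg2 : AddCommGroup V2]
  [acg3 : AddCommGroup V3]
  [acg4 : AddCommGroup V4]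
  [mod1 : Module k V1]
  [mod2 : Module k V2]
  [mod3 : Module k V3]
  [mod4 : Module k V4]
  [fin1 : FiniteDimensional k V1]
  [fin2 : FiniteDimensional k V2]
  [fin3 : FiniteDimensional k V3]
  [fin4 : FiniteDimensional k V4]
  ma : V1 →ₗ[k] V2
  mb : V1 →ₗ[k] V3
  mc : V2 →ₗ[k] V4
  md : V3 →ₗ[k] V4

attribute [instance] QRep.acg1 QRep.acg2 QRep.acg3 QRep.acg4
  QRep.mod1 QRep.mod2 QRep.mod3 QRep.mod4
  QRep.fin1 QRep.fin2 QRep.fin3 QRep.fin4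

variable {k}

/-- Morphisms of representations of `Q`. -/
@[ext]
structure QHom (M N : QRep k) where
  f1 : M.V1 →ₗ[k] N.V1
  f2 : M.V2 →ₗ[k] N.V2
  f3 : M.V3 →ₗ[k] N.V3
  f4 : M.V4 →ₗ[k] N.V4
  comm_a : f2 ∘ₗ M.ma = N.ma ∘ₗ f1
  comm_b : f3 ∘ₗ M.mb = N.mb ∘ₗ f1
  comm_c : f4 ∘ₗ M.mc = N.mc ∘ₗ f2
  comm_d : f4 ∘ₗ M.md = N.md ∘ₗ f3

/-- Two representations are isomorphic iff there is a morphism all of whose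
components are bijective. -/
def QIso (M N : QRep k) : Prop :=
  ∃ f : QHom M N, Function.Bijective f.f1 ∧ Function.Bijective f.f2 ∧
    Function.Bijective f.f3 ∧ Function.Bijective f.f4

/-- The zero representation(s). -/
def QRep.IsZeroRep (M : QRep k) : Prop :=
  Subsingleton M.V1 ∧ Subsingleton M.V2 ∧ Subsingleton M.V3 ∧ Subsingleton M.V4

/-- Vertexwise direct sum of representations. -/
def QRep.dsum (M N : QRep k) : QRep k where
  V1 := M.V1 × N.V1
  V2 := M.V2 × N.V2
  V3 := M.V3 × N.V3
  V4 := M.V4 × N.V4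
  ma := M.ma.prodMap N.ma
  mb := M.mb.prodMap N.mb
  mc := M.mc.prodMap N.mc
  md := M.md.prodMap N.md

/-- Direct sum of `n` copies of a representation. -/
def QRep.dpow (M : QRep k) (n : ℕ) : QRep k where
  V1 := Fin n → M.V1
  V2 := Fin n → M.V2
  V3 := Fin n → M.V3
  V4 := Fin n → M.V4
  ma := M.ma.compLeft (Fin n)
  mb := M.mb.compLeft (Fin n)
  mc := M.mc.compLeft (Fin n)
  md := M.md.compLeft (Fin n)

/-- A representation is indecomposable if it is nonzero and not isomorphic to a
direct sum of two nonzero representations. -/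
def QRep.Indecomposable (M : QRep k) : Prop :=
  ¬ M.IsZeroRep ∧ ∀ A B : QRep k, QIso M (A.dsum B) → A.IsZeroRep ∨ B.IsZeroRep

/-- `0 → A → B → C → 0` is short exact (vertexwise). -/
def QShortExact {A B C : QRep k} (f : QHom A B) (g : QHom B C) : Prop :=
  (Function.Injective f.f1 ∧ Function.Injective f.f2 ∧
    Function.Injective f.f3 ∧ Function.Injective f.f4) ∧
  (Function.Surjective g.f1 ∧ Function.Surjective g.f2 ∧
    Function.Surjective g.f3 ∧ Function.Surjective g.f4) ∧
  (LinearMap.range f.f1 = LinearMap.ker g.f1 ∧ LinearMap.range f.f2 = LinearMap.ker g.f2 ∧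
    LinearMap.range f.f3 = LinearMap.ker g.f3 ∧ LinearMap.range f.f4 = LinearMap.ker g.f4)

variable (k)

/-- The `n×n` Jordan block with eigenvalue `lam`, as a linear endomorphism of `kⁿ`. -/
def jordan (n : ℕ) (lam : k) : (Fin n → k) →ₗ[k] (Fin n → k) :=
  Matrix.mulVecLin (Matrix.of fun i j : Fin n =>
    if i = j then lam else if (i : ℕ) + 1 = (j : ℕ) then 1 else 0)

/-- The representation `M_n(λ) = (kⁿ,kⁿ,kⁿ,kⁿ; id,id,id,J_n(λ))`. -/
def Mlam (n : ℕ) (lam : k) : QRep k where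
  V1 := Fin n → k
  V2 := Fin n → k
  V3 := Fin n → k
  V4 := Fin n → k
  ma := LinearMap.id
  mb := LinearMap.id
  mc := LinearMap.id
  md := jordan k n lam

/-- The indecomposable projective `P₁ = (k,k,k,k²)`. -/
def P1 : QRep k where
  V1 := k
  V2 := k
  V3 := k
  V4 := k × k
  ma := LinearMap.id
  mb := LinearMap.id
  mc := LinearMap.inl k k k
  md := LinearMap.inr k k k

/-- The indecomposable projective `P₂ = (0,k,0,k)`. -/
def P2 : QRep k where
  V1 := Fin 0 → k
  V2 := k
  V3 := Fin 0 → k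
  V4 := k
  ma := 0
  mb := 0
  mc := LinearMap.id
  md := 0

/-- The indecomposable projective `P₃ = (0,0,k,k)`. -/
def P3 : QRep k where
  V1 := Fin 0 → k
  V2 := Fin 0 → k
  V3 := k
  V4 := k
  ma := 0
  mb := 0
  mc := 0
  md := LinearMap.id

/-- The indecomposable projective `P₄ = (0,0,0,k)`. -/
def P4 : QRep k where
  V1 := Fin 0 → k
  V2 := Fin 0 → k
  V3 := Fin 0 → k
  V4 := k
  ma := 0
  mb := 0
  mc := 0
  md := 0

variable (k : Type) [Field k]

def Emap (n : ℕ) : (Fin n → k) →ₗ[k] (Fin (n+1) → k) where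
  toFun x := Fin.snoc x 0
  map_add' x y := by funext j; refine Fin.lastCases ?_ ?_ j <;> simp
  map_smul' c x := by funext j; refine Fin.lastCases ?_ ?_ j <;> simp

def Smap (n : ℕ) : (Fin n → k) →ₗ[k] (Fin (n+1) → k) where
  toFun x := Fin.cons 0 x
  map_add' x y := by funext j; refine Fin.cases ?_ ?_ j <;> simp
  map_smul' c x := by funext j; refine Fin.cases ?_ ?_ j <;> simp

@[simp] lemma Emap_apply (n : ℕ) (x : Fin n → k) : Emap k n x = Fin.snoc x 0 := rfl
@[simp] lemma Smap_apply (n : ℕ) (x : Fin n → k) : Smap k n x = Fin.cons 0 x := rfl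

lemma snoc_eval {n : ℕ} (v : Fin n → k) (i : Fin (n+1)) :
    (Fin.snoc v 0 : Fin (n+1) → k) i = if h : (i:ℕ) < n then v ⟨i, h⟩ else 0 := by
  rcases Fin.eq_castSucc_or_eq_last i with ⟨j, rfl⟩ | rfl
  · have hj : ((j.castSucc : Fin (n+1)) : ℕ) < n := j.2
    rw [dif_pos hj, Fin.snoc_castSucc]
    congr 1
  · rw [dif_neg (by simp), Fin.snoc_last]

lemma cons_eval {n : ℕ} (v : Fin n → k) (i : Fin (n+1)) :
    (Fin.cons 0 v : Fin (n+1) → k) i =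
      if h : 0 < (i:ℕ) then v ⟨(i:ℕ)-1, by have := i.isLt; omega⟩ else 0 := by
  refine Fin.cases ?_ ?_ i
  · simp
  · intro j
    rw [dif_pos (by simp), Fin.cons_succ]
    congr 1

lemma snoc_single {n : ℕ} (a : Fin n) :
    (Fin.snoc (Pi.single a (1:k)) 0 : Fin (n+1) → k) = Pi.single a.castSucc 1 := by
  funext t
  rw [snoc_eval]
  have ht := t.isLt
  have ha := a.isLt
  simp only [Pi.single_apply, Fin.ext_iff, Fin.coe_castSucc]
  split_ifs <;> first | rfl | (exfalso; omega)

lemma cons_single {n : ℕ} (a : Fin n) :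
    (Fin.cons 0 (Pi.single a (1:k)) : Fin (n+1) → k) = Pi.single a.succ 1 := by
  funext t
  rw [cons_eval]
  have ht := t.isLt
  have ha := a.isLt
  simp only [Pi.single_apply, Fin.ext_iff, Fin.val_succ]
  split_ifs <;> first | rfl | (exfalso; omega)

lemma endo_scalar (n : ℕ) (f1 : (Fin n → k) →ₗ[k] (Fin n → k))
    (f2 : (Fin (n+1) → k) →ₗ[k] (Fin (n+1) → k))
    (hE : f2 ∘ₗ Emap k n = Emap k n ∘ₗ f1)
    (hS : f2 ∘ₗ Smap k n = Smap k n ∘ₗ f1) :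
    ∃ c : k, f1 = c • LinearMap.id ∧ f2 = c • LinearMap.id := by
  have hE' : ∀ x, f2 (Fin.snoc x 0) = Fin.snoc (f1 x) 0 := fun x => LinearMap.congr_fun hE x
  have hS' : ∀ x, f2 (Fin.cons 0 x) = Fin.cons 0 (f1 x) := fun x => LinearMap.congr_fun hS x
  rcases Nat.eq_zero_or_pos n with hn | hn
  · subst hn
    refine ⟨f2 (Pi.single 0 1) 0, ?_, ?_⟩
    · exact LinearMap.ext fun x => Subsingleton.elim _ _
    · refine Module.Basis.ext (Pi.basisFun k (Fin 1)) fun i => ?_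
      rw [Pi.basisFun_apply, show i = 0 from by ext; have := i.isLt; omega]
      funext j
      rw [show j = 0 from by ext; have := j.isLt; omega]
      simp
  -- main case
  set U : ℕ → ℕ → k := fun j i =>
    if h : j < n ∧ i < n then f1 (Pi.single ⟨j, h.1⟩ 1) ⟨i, h.2⟩ else 0 with hU
  have key : ∀ (j i : ℕ), j + 1 < n → i < n + 1 →
      (if h : i < n then U (j+1) i else 0) = (if h : 0 < i then U j (i-1) else 0) := by
    intro j i hj hi
    have hq : (Fin.snoc (f1 (Pi.single ⟨j+1, hj⟩ 1)) 0 : Fin (n+1) → k)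
        = Fin.cons 0 (f1 (Pi.single ⟨j, by omega⟩ 1)) := by
      rw [← hE' _, ← hS' _]
      congr 1
      funext t
      rw [snoc_eval, cons_eval]
      have ht := t.isLt
      simp only [Pi.single_apply, Fin.ext_iff]
      split_ifs <;> first | rfl | (exfalso; omega)
    have h2 := congr_fun hq ⟨i, hi⟩
    rw [snoc_eval, cons_eval] at h2
    simp only [hU]
    rw [show (if h : i < n then (if h' : j+1 < n ∧ i < n then f1 (Pi.single ⟨j+1, h'.1⟩ 1) ⟨i, h'.2⟩ else 0) else 0)
        = (if h : i < n then f1 (Pi.single ⟨j+1, hj⟩ 1) ⟨i, h⟩ else 0) from by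
      split_ifs with h1 h2' <;> first | rfl | (exfalso; omega)]
    rw [show (if h : 0 < i then (if h' : j < n ∧ i - 1 < n then f1 (Pi.single ⟨j, h'.1⟩ 1) ⟨i-1, h'.2⟩ else 0) else 0)
        = (if h : 0 < i then f1 (Pi.single ⟨j, by omega⟩ 1) ⟨i-1, by omega⟩ else 0) from by
      split_ifs with h1 h2' <;> first | rfl | (exfalso; omega)]
    convert h2 using 2
  have R0 : ∀ j : ℕ, 0 < j → j < n → U j 0 = 0 := by
    intro j h0 hjn
    have := key (j-1) 0 (by omega) (by omega)
    rw [dif_pos hn, dif_neg (by omega)] at this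
    rw [show j - 1 + 1 = j from by omega] at this
    exact this
  have Rstep : ∀ j i : ℕ, j + 1 < n → i + 1 < n → U (j+1) (i+1) = U j i := by
    intro j i hj hi
    have := key j (i+1) hj (by omega)
    rw [dif_pos hi, dif_pos (by omega)] at this
    simpa using this
  have Rlast : ∀ j : ℕ, j + 1 < n → U j (n-1) = 0 := by
    intro j hj
    have := key j n hj (by omega)
    rw [dif_neg (by omega), dif_pos (by omega)] at this
    exact this.symm
  have shift : ∀ (s j i : ℕ), j + s + 1 ≤ n → i + s + 1 ≤ n → U (j+s) (i+s) = U j i := by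
    intro s
    induction s with
    | zero => intro j i _ _; rfl
    | succ s ih =>
      intro j i hj hi
      have h1 : j + (s+1) = (j+s) + 1 := by omega
      have h2 : i + (s+1) = (i+s) + 1 := by omega
      rw [h1, h2, Rstep (j+s) (i+s) (by omega) (by omega)]
      exact ih j i (by omega) (by omega)
  have diag : ∀ j i : ℕ, j < n → i < n → U j i = if i = j then U 0 0 else 0 := by
    intro j i hj hi
    rcases lt_trichotomy i j with h | h | h
    · rw [if_neg (by omega)]
      have hs := shift i (j-i) 0 (by omega) (by omega)
      rw [show j - i + i = j from by omega] at hs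
      simp only [Nat.zero_add] at hs
      rw [hs]
      exact R0 (j-i) (by omega) (by omega)
    · subst h
      rw [if_pos rfl]
      have hs := shift i 0 0 (by omega) (by omega)
      simpa using hs
    · rw [if_neg (by omega)]
      have hs := shift j 0 (i-j) (by omega) (by omega)
      rw [show i - j + j = i from by omega] at hs
      simp only [Nat.zero_add] at hs
      rw [hs]
      set m := i - j with hm
      have hs2 := shift (n-1-m) 0 m (by omega) (by omega)
      simp only [Nat.zero_add] at hs2
      rw [show m + (n-1-m) = n-1 from by omega] at hs2
      rw [← hs2]
      exact Rlast (n-1-m) (by omega)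
  have hUval : ∀ (j i : Fin n), U (j:ℕ) (i:ℕ) = f1 (Pi.single j 1) i := by
    intro j i
    show (if h : (j:ℕ) < n ∧ (i:ℕ) < n then f1 (Pi.single ⟨(j:ℕ), h.1⟩ 1) ⟨(i:ℕ), h.2⟩ else 0) = _
    rw [dif_pos ⟨j.2, i.2⟩]
  have hf1 : ∀ v : Fin n → k, f1 v = U 0 0 • v := by
    have hh : f1 = U 0 0 • LinearMap.id := by
      refine Module.Basis.ext (Pi.basisFun k (Fin n)) fun j => ?_
      rw [Pi.basisFun_apply]
      funext i
      have hd := diag j i j.2 i.2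
      rw [hUval j i] at hd
      rw [hd]
      simp only [LinearMap.smul_apply, LinearMap.id_apply, Pi.smul_apply, Pi.single_apply,
        smul_eq_mul]
      by_cases h : (i:ℕ) = (j:ℕ)
      · rw [if_pos h, if_pos (Fin.ext h)]; ring
      · rw [if_neg h, if_neg (fun hh => h (congrArg Fin.val hh))]; ring
    intro v; rw [hh]; simp
  refine ⟨U 0 0, ?_, ?_⟩
  · exact LinearMap.ext fun v => hf1 v
  · refine Module.Basis.ext (Pi.basisFun k (Fin (n+1))) fun i => ?_
    rw [Pi.basisFun_apply]
    rcases Fin.eq_castSucc_or_eq_last i with ⟨a, rfl⟩ | rfl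
    · rw [← snoc_single, hE' _, hf1]
      simp only [LinearMap.smul_apply, LinearMap.id_apply]
      funext t
      simp only [Pi.smul_apply]
      rw [snoc_eval, snoc_eval]
      split_ifs <;> simp
    · have hlast : Fin.last n = Fin.succ ⟨n-1, by omega⟩ := by
        ext; simp; omega
      rw [hlast, ← cons_single, hS' _, hf1]
      simp only [LinearMap.smul_apply, LinearMap.id_apply]
      funext t
      simp only [Pi.smul_apply]
      rw [cons_eval, cons_eval]
      split_ifs <;> simp

lemma snoc_neg {n : ℕ} (v : Fin n → k) (a : k) :
    (Fin.snoc (-v) (-a) : Fin (n+1) → k) = -(Fin.snoc v a) := by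
  funext j; refine Fin.lastCases ?_ ?_ j <;> simp

lemma cons_zero_zero {n : ℕ} : (Fin.cons 0 (0 : Fin n → k) : Fin (n+1) → k) = 0 := by
  funext j; refine Fin.cases ?_ ?_ j <;> simp

lemma snoc_zero_zero {n : ℕ} : (Fin.snoc (0 : Fin n → k) 0 : Fin (n+1) → k) = 0 := by
  funext j; refine Fin.lastCases ?_ ?_ j <;> simp

/-- The module `M` with dimension vector `(n, n+1, n, n+1)`. -/
def MM (n : ℕ) : QRep k where
  V1 := Fin n → k
  V2 := Fin (n+1) → k
  V3 := Fin n → k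
  V4 := Fin (n+1) → k
  ma := Emap k n
  mb := LinearMap.id
  mc := LinearMap.id
  md := Smap k n

section helpers

variable {k}

lemma comp_zero_left {V W X : Type} [AddCommGroup V] [Module k V] [AddCommGroup W]
    [Module k W] [AddCommGroup X] [Module k X]
    (f : X →ₗ[k] V × W) (ψ : V × W →ₗ[k] X)
    (hl : ∀ x, ψ (f x) = x) (hs : ∀ x, ψ ((f x).1, 0) = 0)
    (hsurj : Function.Surjective f) : ∀ a : V, a = 0 := by
  intro a
  obtain ⟨x, hx⟩ := hsurj (a, 0)
  have e1 : ψ ((a : V), (0 : W)) = 0 := by have h := hs x; rw [hx] at h; exact h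
  have e2 : ψ ((a : V), (0 : W)) = x := by rw [← hx]; exact hl x
  have hx0 : x = 0 := by rw [← e2, e1]
  have : ((a : V), (0 : W)) = 0 := by rw [← hx, hx0, map_zero]
  exact congrArg Prod.fst this

lemma comp_one_right {V W X : Type} [AddCommGroup V] [Module k V] [AddCommGroup W]
    [Module k W] [AddCommGroup X] [Module k X]
    (f : X →ₗ[k] V × W) (ψ : V × W →ₗ[k] X)
    (hl : ∀ x, ψ (f x) = x) (hr : ∀ y, f (ψ y) = y) (hs : ∀ x, ψ ((f x).1, 0) = x)
    (hsurj : Function.Surjective f) : ∀ b : W, b = 0 := by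
  intro b
  obtain ⟨x, hx⟩ := hsurj (0, b)
  have hinj : Function.Injective ψ := by
    intro y y' h
    rw [← hr y, ← hr y', h]
  have e1 : ((f x).1, (0 : W)) = f x := hinj (by rw [hs x, hl x])
  have e2 : (f x).2 = 0 := by
    have := congrArg Prod.snd e1
    simpa using this.symm
  rw [hx] at e2
  exact e2

end helpers

lemma MM_indecomposable (n : ℕ) : (MM k n).Indecomposable := by
  constructor
  · rintro ⟨-, h2, -, -⟩
    have hz : (Pi.single 0 1 : Fin (n+1) → k) = (0 : Fin (n+1) → k) :=
      @Subsingleton.elim _ h2 _ _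
    have h0 := congr_fun hz 0
    simp at h0
  · rintro A B ⟨φ, h1, h2, h3, h4⟩
    -- pointwise commutation relations
    have ca : ∀ x, φ.f2 ((MM k n).ma x) = (A.dsum B).ma (φ.f1 x) :=
      fun x => LinearMap.congr_fun φ.comm_a x
    have cb : ∀ x, φ.f3 ((MM k n).mb x) = (A.dsum B).mb (φ.f1 x) :=
      fun x => LinearMap.congr_fun φ.comm_b x
    have cc : ∀ x, φ.f4 ((MM k n).mc x) = (A.dsum B).mc (φ.f2 x) :=
      fun x => LinearMap.congr_fun φ.comm_c x
    have cd : ∀ x, φ.f4 ((MM k n).md x) = (A.dsum B).md (φ.f3 x) :=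
      fun x => LinearMap.congr_fun φ.comm_d x
    -- inverses
    obtain ⟨ψ1, hψ1l, hψ1r⟩ :
        ∃ ψ : (A.dsum B).V1 →ₗ[k] (MM k n).V1,
          (∀ x, ψ (φ.f1 x) = x) ∧ (∀ y, φ.f1 (ψ y) = y) :=
      ⟨(LinearEquiv.ofBijective φ.f1 h1).symm.toLinearMap,
        fun x => (LinearEquiv.ofBijective φ.f1 h1).symm_apply_apply x,
        fun y => (LinearEquiv.ofBijective φ.f1 h1).apply_symm_apply y⟩
    obtain ⟨ψ2, hψ2l, hψ2r⟩ :
        ∃ ψ : (A.dsum B).V2 →ₗ[k] (MM k n).V2,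
          (∀ x, ψ (φ.f2 x) = x) ∧ (∀ y, φ.f2 (ψ y) = y) :=
      ⟨(LinearEquiv.ofBijective φ.f2 h2).symm.toLinearMap,
        fun x => (LinearEquiv.ofBijective φ.f2 h2).symm_apply_apply x,
        fun y => (LinearEquiv.ofBijective φ.f2 h2).apply_symm_apply y⟩
    obtain ⟨ψ3, hψ3l, hψ3r⟩ :
        ∃ ψ : (A.dsum B).V3 →ₗ[k] (MM k n).V3,
          (∀ x, ψ (φ.f3 x) = x) ∧ (∀ y, φ.f3 (ψ y) = y) :=
      ⟨(LinearEquiv.ofBijective φ.f3 h3).symm.toLinearMap,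
        fun x => (LinearEquiv.ofBijective φ.f3 h3).symm_apply_apply x,
        fun y => (LinearEquiv.ofBijective φ.f3 h3).apply_symm_apply y⟩
    obtain ⟨ψ4, hψ4l, hψ4r⟩ :
        ∃ ψ : (A.dsum B).V4 →ₗ[k] (MM k n).V4,
          (∀ x, ψ (φ.f4 x) = x) ∧ (∀ y, φ.f4 (ψ y) = y) :=
      ⟨(LinearEquiv.ofBijective φ.f4 h4).symm.toLinearMap,
        fun x => (LinearEquiv.ofBijective φ.f4 h4).symm_apply_apply x,
        fun y => (LinearEquiv.ofBijective φ.f4 h4).apply_symm_apply y⟩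
    -- projections
    let Q1 : (A.dsum B).V1 →ₗ[k] (A.dsum B).V1 :=
      (LinearMap.id : A.V1 →ₗ[k] A.V1).prodMap (0 : B.V1 →ₗ[k] B.V1)
    let Q2 : (A.dsum B).V2 →ₗ[k] (A.dsum B).V2 :=
      (LinearMap.id : A.V2 →ₗ[k] A.V2).prodMap (0 : B.V2 →ₗ[k] B.V2)
    let Q3 : (A.dsum B).V3 →ₗ[k] (A.dsum B).V3 :=
      (LinearMap.id : A.V3 →ₗ[k] A.V3).prodMap (0 : B.V3 →ₗ[k] B.V3)
    let Q4 : (A.dsum B).V4 →ₗ[k] (A.dsum B).V4 :=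
      (LinearMap.id : A.V4 →ₗ[k] A.V4).prodMap (0 : B.V4 →ₗ[k] B.V4)
    let e1 : (Fin n → k) →ₗ[k] (Fin n → k) := ψ1 ∘ₗ Q1 ∘ₗ φ.f1
    let e2 : (Fin (n+1) → k) →ₗ[k] (Fin (n+1) → k) := ψ2 ∘ₗ Q2 ∘ₗ φ.f2
    -- commutation of projections with the structure maps of the direct sum
    have hQa : ∀ v : (A.dsum B).V1, Q2 ((A.dsum B).ma v) = (A.dsum B).ma (Q1 v) := by
      intro v
      show ((A.ma v.1, (0 : B.V2)) : A.V2 × B.V2) = (A.ma v.1, B.ma 0)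
      rw [map_zero]
    have hQb : ∀ v : (A.dsum B).V1, Q3 ((A.dsum B).mb v) = (A.dsum B).mb (Q1 v) := by
      intro v
      show ((A.mb v.1, (0 : B.V3)) : A.V3 × B.V3) = (A.mb v.1, B.mb 0)
      rw [map_zero]
    have hQc : ∀ v : (A.dsum B).V2, Q4 ((A.dsum B).mc v) = (A.dsum B).mc (Q2 v) := by
      intro v
      show ((A.mc v.1, (0 : B.V4)) : A.V4 × B.V4) = (A.mc v.1, B.mc 0)
      rw [map_zero]
    have hQd : ∀ v : (A.dsum B).V3, Q4 ((A.dsum B).md v) = (A.dsum B).md (Q3 v) := by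
      intro v
      show ((A.md v.1, (0 : B.V4)) : A.V4 × B.V4) = (A.md v.1, B.md 0)
      rw [map_zero]
    -- e3 = e1 pointwise, e4 = e2 pointwise
    have h31 : ∀ x : Fin n → k, ψ3 (Q3 (φ.f3 x)) = ψ1 (Q1 (φ.f1 x)) := by
      intro x
      apply h3.1
      rw [hψ3r]
      have hx : φ.f3 x = (A.dsum B).mb (φ.f1 x) := cb x
      rw [hx, hQb]
      have := cb (ψ1 (Q1 (φ.f1 x)))
      rw [hψ1r] at this
      exact this.symm
    have h42 : ∀ x : Fin (n+1) → k, ψ4 (Q4 (φ.f4 x)) = ψ2 (Q2 (φ.f2 x)) := by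
      intro x
      apply h4.1
      rw [hψ4r]
      have hx : φ.f4 x = (A.dsum B).mc (φ.f2 x) := cc x
      rw [hx, hQc]
      have := cc (ψ2 (Q2 (φ.f2 x)))
      rw [hψ2r] at this
      exact this.symm
    -- the two relations needed for endo_scalar
    have hErel : e2 ∘ₗ Emap k n = Emap k n ∘ₗ e1 := by
      refine LinearMap.ext fun x => ?_
      show ψ2 (Q2 (φ.f2 (Emap k n x))) = Emap k n (ψ1 (Q1 (φ.f1 x)))
      have hx : φ.f2 (Emap k n x) = (A.dsum B).ma (φ.f1 x) := ca x
      rw [hx, hQa]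
      apply h2.1
      rw [hψ2r]
      have := ca (ψ1 (Q1 (φ.f1 x)))
      rw [hψ1r] at this
      exact this.symm
    have hSrel : e2 ∘ₗ Smap k n = Smap k n ∘ₗ e1 := by
      refine LinearMap.ext fun x => ?_
      show ψ2 (Q2 (φ.f2 (Smap k n x))) = Smap k n (ψ1 (Q1 (φ.f1 x)))
      rw [← h42, ← h31]
      show ψ4 (Q4 (φ.f4 ((MM k n).md x))) = (MM k n).md (ψ3 (Q3 (φ.f3 x)))
      have hx : φ.f4 ((MM k n).md x) = (A.dsum B).md (φ.f3 x) := cd x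
      rw [hx, hQd]
      apply h4.1
      rw [hψ4r]
      have := cd (ψ3 (Q3 (φ.f3 x)))
      rw [hψ3r] at this
      exact this.symm
    obtain ⟨c, hc1, hc2⟩ := endo_scalar k n e1 e2 hErel hSrel
    have hc1' : ∀ x : Fin n → k, ψ1 (Q1 (φ.f1 x)) = c • x := fun x => by
      have := LinearMap.congr_fun hc1 x; simp at this; exact this
    have hc2' : ∀ x : Fin (n+1) → k, ψ2 (Q2 (φ.f2 x)) = c • x := fun x => by
      have := LinearMap.congr_fun hc2 x; simp at this; exact this
    have hc3' : ∀ x : Fin n → k, ψ3 (Q3 (φ.f3 x)) = c • x := fun x => by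
      rw [h31]; exact hc1' x
    have hc4' : ∀ x : Fin (n+1) → k, ψ4 (Q4 (φ.f4 x)) = c • x := fun x => by
      rw [h42]; exact hc2' x
    -- idempotency gives c * c = c
    have hQ2idem : ∀ v : (A.dsum B).V2, Q2 (Q2 v) = Q2 v := fun v => rfl
    have hcc : c * c = c := by
      have hx := hc2' (ψ2 (Q2 (φ.f2 (Pi.single 0 1))))
      rw [hψ2r, hQ2idem, hc2' (Pi.single 0 1)] at hx
      have h0 := congr_fun hx 0
      simpa using h0.symm
    have hc01 : c = 0 ∨ c = 1 := by
      rcases eq_or_ne c 0 with h | h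
      · exact Or.inl h
      · exact Or.inr (mul_left_cancel₀ h (by rw [hcc, mul_one]))
    have hQ1fst : ∀ v : (A.dsum B).V1, Q1 v = ((v.1 : A.V1), (0 : B.V1)) := fun v => rfl
    have hQ2fst : ∀ v : (A.dsum B).V2, Q2 v = ((v.1 : A.V2), (0 : B.V2)) := fun v => rfl
    have hQ3fst : ∀ v : (A.dsum B).V3, Q3 v = ((v.1 : A.V3), (0 : B.V3)) := fun v => rfl
    have hQ4fst : ∀ v : (A.dsum B).V4, Q4 v = ((v.1 : A.V4), (0 : B.V4)) := fun v => rfl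
    rcases hc01 with hc | hc
    · left
      subst hc
      refine ⟨subsingleton_of_forall_eq 0 ?_, subsingleton_of_forall_eq 0 ?_,
        subsingleton_of_forall_eq 0 ?_, subsingleton_of_forall_eq 0 ?_⟩
      · exact comp_zero_left φ.f1 ψ1
          hψ1l (fun x => by have h := hc1' x; rw [hQ1fst] at h; exact h.trans (zero_smul k x)) h1.2
      · exact comp_zero_left φ.f2 ψ2
          hψ2l (fun x => by have h := hc2' x; rw [hQ2fst] at h; exact h.trans (zero_smul k x)) h2.2
      · exact comp_zero_left φ.f3 ψ3
          hψ3l (fun x => by have h := hc3' x; rw [hQ3fst] at h; exact h.trans (zero_smul k x)) h3.2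
      · exact comp_zero_left φ.f4 ψ4
          hψ4l (fun x => by have h := hc4' x; rw [hQ4fst] at h; exact h.trans (zero_smul k x)) h4.2
    · right
      subst hc
      refine ⟨subsingleton_of_forall_eq 0 ?_, subsingleton_of_forall_eq 0 ?_,
        subsingleton_of_forall_eq 0 ?_, subsingleton_of_forall_eq 0 ?_⟩
      · exact comp_one_right φ.f1 ψ1
          hψ1l hψ1r (fun x => by have h := hc1' x; rw [hQ1fst] at h; exact h.trans (one_smul k x)) h1.2
      · exact comp_one_right φ.f2 ψ2
          hψ2l hψ2r (fun x => by have h := hc2' x; rw [hQ2fst] at h; exact h.trans (one_smul k x)) h2.2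
      · exact comp_one_right φ.f3 ψ3
          hψ3l hψ3r (fun x => by have h := hc3' x; rw [hQ3fst] at h; exact h.trans (one_smul k x)) h3.2
      · exact comp_one_right φ.f4 ψ4
          hψ4l hψ4r (fun x => by have h := hc4' x; rw [hQ4fst] at h; exact h.trans (one_smul k x)) h4.2

/-- Second component of the quotient map. -/
def gmap2 (n : ℕ) : (k × (Fin n → k)) →ₗ[k] (Fin (n+1) → k) where
  toFun p := Fin.snoc p.2 p.1
  map_add' p q := by funext j; refine Fin.lastCases ?_ ?_ j <;> simp
  map_smul' c p := by funext j; refine Fin.lastCases ?_ ?_ j <;> simp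

@[simp] lemma gmap2_apply (n : ℕ) (p : k × (Fin n → k)) :
    gmap2 k n p = Fin.snoc p.2 p.1 := rfl

/-- Fourth component of the quotient map. -/
def gmap4 (n : ℕ) : (k × (Fin n → k × k)) →ₗ[k] (Fin (n+1) → k) :=
  gmap2 k n ∘ₗ (LinearMap.prodMap LinearMap.id ((LinearMap.fst k k k).compLeft (Fin n)))
    + Smap k n ∘ₗ ((LinearMap.snd k k k).compLeft (Fin n)) ∘ₗ
        (LinearMap.snd k k (Fin n → k × k))

@[simp] lemma gmap4_apply (n : ℕ) (p : k × (Fin n → k × k)) :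
    gmap4 k n p = Fin.snoc (fun i => (p.2 i).1) p.1 + Fin.cons 0 (fun i => (p.2 i).2) := rfl

/-- Fourth component of the kernel inclusion. -/
def fmap4 (n : ℕ) : (Fin n → k) →ₗ[k] (k × (Fin n → k × k)) :=
  LinearMap.prod
    (-(LinearMap.proj (Fin.last n) ∘ₗ Smap k n))
    (LinearMap.pi fun i => LinearMap.prod
      (-(LinearMap.proj (Fin.castSucc i) ∘ₗ Smap k n)) (LinearMap.proj i))

@[simp] lemma fmap4_apply (n : ℕ) (x : Fin n → k) :
    fmap4 k n x = (-(Smap k n x (Fin.last n)),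
      fun i => (-(Smap k n x (Fin.castSucc i)), x i)) := rfl

instance (n : ℕ) : Subsingleton ((P4 k).dpow n).V1 :=
  inferInstanceAs (Subsingleton (Fin n → Fin 0 → k))
instance (n : ℕ) : Subsingleton ((P4 k).dpow n).V2 :=
  inferInstanceAs (Subsingleton (Fin n → Fin 0 → k))
instance (n : ℕ) : Subsingleton ((P4 k).dpow n).V3 :=
  inferInstanceAs (Subsingleton (Fin n → Fin 0 → k))
instance : Subsingleton (P2 k).V1 := inferInstanceAs (Subsingleton (Fin 0 → k))
instance : Subsingleton (P2 k).V3 := inferInstanceAs (Subsingleton (Fin 0 → k))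

/-- there is an indecomposable representation `M` of `Q` with the
given dimension vector together with a short exact sequence as indicated. -/
theorem stmt5 (k : Type) [Field k] (n : ℕ) :
    ∃ M : QRep k, M.Indecomposable ∧
      Module.finrank k M.V1 = n ∧ Module.finrank k M.V2 = n+1 ∧
      Module.finrank k M.V3 = n ∧ Module.finrank k M.V4 = n+1 ∧
      ∃ (f : QHom ((P4 k).dpow n) ((P2 k).dsum ((P1 k).dpow n))) (g : QHom ((P2 k).dsum ((P1 k).dpow n)) M), QShortExact f g := by
  refine ⟨MM k n, MM_indecomposable k n, Module.finrank_fin_fun k, Module.finrank_fin_fun k,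
    Module.finrank_fin_fun k, Module.finrank_fin_fun k, ?_⟩
  -- the kernel inclusion
  refine ⟨⟨0, 0, 0, fmap4 k n, ?_, ?_, ?_, ?_⟩, ?_⟩
  · refine LinearMap.ext fun x => ?_
    rw [Subsingleton.elim x 0]
    simp
  · refine LinearMap.ext fun x => ?_
    rw [Subsingleton.elim x 0]
    simp
  · refine LinearMap.ext fun x => ?_
    rw [Subsingleton.elim x 0]
    simp
  · refine LinearMap.ext fun x => ?_
    rw [Subsingleton.elim x 0]
    simp
  -- the quotient map
  refine ⟨⟨LinearMap.snd k (Fin 0 → k) (Fin n → k), gmap2 k n,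
      LinearMap.snd k (Fin 0 → k) (Fin n → k), gmap4 k n, ?_, ?_, ?_, ?_⟩, ?_⟩
  · -- comm_a
    refine LinearMap.ext fun p => ?_
    show (Fin.snoc p.2 ((0 : (Fin 0 → k) →ₗ[k] k) p.1) : Fin (n+1) → k)
        = (Fin.snoc p.2 (0:k) : Fin (n+1) → k)
    rfl
  · -- comm_b
    rfl
  · -- comm_c
    refine LinearMap.ext fun p => ?_
    show (Fin.snoc p.2 p.1 : Fin (n+1) → k) + Fin.cons (0:k) (0 : Fin n → k)
        = (Fin.snoc p.2 p.1 : Fin (n+1) → k)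
    rw [cons_zero_zero, add_zero]
  · -- comm_d
    refine LinearMap.ext fun p => ?_
    show (Fin.snoc (0 : Fin n → k) ((0 : (Fin 0 → k) →ₗ[k] k) p.1) : Fin (n+1) → k)
        + Fin.cons (0:k) p.2 = Fin.cons (0:k) p.2
    exact (congrArg (· + (Fin.cons (0:k) p.2 : Fin (n+1) → k)) (snoc_zero_zero k)).trans (zero_add _)
  -- short exactness
  refine ⟨⟨?_, ?_, ?_, ?_⟩, ⟨?_, ?_, ?_, ?_⟩, ⟨?_, ?_, ?_, ?_⟩⟩
  · exact fun a b _ => Subsingleton.elim a b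
  · exact fun a b _ => Subsingleton.elim a b
  · exact fun a b _ => Subsingleton.elim a b
  · -- injectivity of fmap4
    intro a b h
    funext i
    exact congrArg (fun p => (p.2 i).2) h
  · exact fun x => ⟨(0, x), rfl⟩
  · -- surjectivity of gmap2
    intro v
    exact ⟨(v (Fin.last n), Fin.init v), Fin.snoc_init_self v⟩
  · exact fun x => ⟨(0, x), rfl⟩
  · -- surjectivity of gmap4
    intro v
    refine ⟨(v (Fin.last n), fun i => (v (Fin.castSucc i), 0)), ?_⟩
    show gmap4 k n (v (Fin.last n), fun i => (v (Fin.castSucc i), 0)) = v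
    have h0 : gmap4 k n (v (Fin.last n), fun i => (v (Fin.castSucc i), 0))
        = Fin.snoc (Fin.init v) (v (Fin.last n)) + Fin.cons (0:k) (0 : Fin n → k) := rfl
    rw [h0, cons_zero_zero, add_zero]
    exact Fin.snoc_init_self v
  · -- range = ker at vertex 1
    rw [LinearMap.range_zero]
    symm
    rw [LinearMap.ker_eq_bot]
    intro a b h
    exact Prod.ext (Subsingleton.elim _ _) h
  · -- vertex 2
    rw [LinearMap.range_zero]
    symm
    rw [LinearMap.ker_eq_bot]
    intro a b h
    change k × (Fin n → k) at a b
    have h' : (Fin.snoc a.2 a.1 : Fin (n+1) → k) = (Fin.snoc b.2 b.1 : Fin (n+1) → k) := h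
    have h1 := congr_fun h' (Fin.last n)
    rw [Fin.snoc_last, Fin.snoc_last] at h1
    have h2 : ∀ i : Fin n, a.2 i = b.2 i := fun i => by
      have hi := congr_fun h' (Fin.castSucc i)
      rwa [Fin.snoc_castSucc, Fin.snoc_castSucc] at hi
    exact Prod.ext h1 (funext h2)
  · -- vertex 3
    rw [LinearMap.range_zero]
    symm
    rw [LinearMap.ker_eq_bot]
    intro a b h
    exact Prod.ext (Subsingleton.elim _ _) h
  · -- vertex 4
    ext p
    rw [LinearMap.mem_range, LinearMap.mem_ker]
    constructor
    · rintro ⟨x, rfl⟩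
      show gmap4 k n (fmap4 k n x) = 0
      have hcomp : gmap4 k n (fmap4 k n x)
          = Fin.snoc (-(Fin.init (Smap k n x))) (-(Smap k n x (Fin.last n))) + Smap k n x :=
        rfl
      rw [hcomp, snoc_neg, show Smap k n x (Fin.last n) = (Smap k n x) (Fin.last n) from rfl,
        Fin.snoc_init_self]
      exact neg_add_cancel _
    · intro h
      change k × (Fin n → k × k) at p
      refine ⟨fun i => (p.2 i).2, ?_⟩
      have h' : (Fin.snoc (fun i => (p.2 i).1) p.1 : Fin (n+1) → k)
          + (Fin.cons 0 (fun i => (p.2 i).2) : Fin (n+1) → k) = 0 := h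
      have hlast := congr_fun h' (Fin.last n)
      rw [Pi.add_apply, Fin.snoc_last, Pi.zero_apply] at hlast
      show fmap4 k n (fun i => (p.2 i).2) = p
      rw [fmap4_apply]
      refine Prod.ext ?_ ?_
      · show -(Smap k n (fun i => (p.2 i).2) (Fin.last n)) = p.1
        exact neg_eq_of_add_eq_zero_left hlast
      · funext i
        refine Prod.ext ?_ rfl
        show -(Smap k n (fun i => (p.2 i).2) (Fin.castSucc i)) = (p.2 i).1
        have hci := congr_fun h' (Fin.castSucc i)
        rw [Pi.add_apply, Fin.snoc_castSucc, Pi.zero_apply] at hci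
        exact neg_eq_of_add_eq_zero_left hci
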